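/- For the Robbins–Monro algorithm under (HL) and (HUA), the functions f_i^γ(θ,y) := v_i(θ − γ_i H(θ,y)), with v_i(θ) := E[|θ_n − θ*| | θ_i = θ], satisfy the Lipschitz bound in y uniformly in θ: [f_i^γ]₁ ≤ (Π_n Π_i^{−1})^{1/2} γ_i [H]₁, where Π_n = ∏_{k=0}^{n−1}(1 − 2λ̲γ_{k+1} + [H]₁²γ_{k+1}²). -/

import Mathlib

open MeasureTheory Real ProbabilityTheory
open scoped RealInnerProductSpace

lemma aux_integrable_bdd {Ω : Type*} [MeasurableSpace Ω] (μ : Measure Ω) [IsProbabilityMeasure μ]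
    {E : Type*} [NormedAddCommGroup E] {f : Ω → E} (hf : AEStronglyMeasurable f μ) (C : ℝ)
    (hC : ∀ ω, ‖f ω‖ ≤ C) : Integrable f μ :=
  (integrable_const C).mono' hf (Filter.Eventually.of_forall hC)

lemma aux_sub_sub {E : Type*} [NormedAddCommGroup E] [Module ℝ E]
    (a b x y : E) (g : ℝ) : (a - g • x) - (b - g • y) = (a - b) - g • (x - y) := by
  rw [smul_sub]; abel

lemma aux_step {Ω : Type*} [MeasurableSpace Ω] (μ : Measure Ω) [IsProbabilityMeasure μ]
    {d q : ℕ}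
    (H : EuclideanSpace ℝ (Fin d) → EuclideanSpace ℝ (Fin q) → EuclideanSpace ℝ (Fin d))
    (KH : ℝ) (hKH : 0 < KH)
    (hHθ : ∀ a b y, ‖H a y - H b y‖ ≤ KH * ‖a - b‖)
    (hHcont : Continuous fun p : EuclideanSpace ℝ (Fin d) × EuclideanSpace ℝ (Fin q) => H p.1 p.2)
    (h : EuclideanSpace ℝ (Fin d) → EuclideanSpace ℝ (Fin d)) (hcont : Continuous h)
    (hhLip : ∀ a b, ‖h a - h b‖ ≤ KH * ‖a - b‖)
    (lam : ℝ)
    (hmono : ∀ a b, lam * ‖a - b‖ ^ 2 ≤ ⟪h a - h b, a - b⟫)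
    (Yn : Ω → EuclideanSpace ℝ (Fin q)) (hYn : Measurable Yn)
    (hIntn : ∀ a b, Integrable (fun ω => H a (Yn ω) - H b (Yn ω)) μ)
    (hν : ∀ a b, (∫ ω, (H a (Yn ω) - H b (Yn ω)) ∂μ) = h a - h b)
    (A B : Ω → EuclideanSpace ℝ (Fin d))
    (hAB : Measurable fun ω => (A ω, B ω))
    (C : ℝ) (hC : 0 ≤ C) (hCb : ∀ ω, ‖A ω - B ω‖ ≤ C)
    (hindep : IndepFun (fun ω => (A ω, B ω)) Yn μ)
    (g : ℝ) (hg : 0 < g) :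
    ∫ ω, ‖(A ω - g • H (A ω) (Yn ω)) - (B ω - g • H (B ω) (Yn ω))‖ ^ 2 ∂μ ≤
      (1 - 2 * lam * g + KH ^ 2 * g ^ 2) * ∫ ω, ‖A ω - B ω‖ ^ 2 ∂μ := by
  classical
  have hA : Measurable A := hAB.fst
  have hB : Measurable B := hAB.snd
  set ν : Measure (EuclideanSpace ℝ (Fin q)) := μ.map Yn with hνdef
  set ρ : Measure (EuclideanSpace ℝ (Fin d) × EuclideanSpace ℝ (Fin d)) :=
    μ.map (fun ω => (A ω, B ω)) with hρdef
  haveI : IsProbabilityMeasure ν := Measure.isProbabilityMeasure_map hYn.aemeasurable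
  haveI : IsProbabilityMeasure ρ := Measure.isProbabilityMeasure_map hAB.aemeasurable
  set G : (EuclideanSpace ℝ (Fin d) × EuclideanSpace ℝ (Fin d)) × EuclideanSpace ℝ (Fin q) → ℝ :=
    fun p => ⟪H p.1.1 p.2 - H p.1.2 p.2, p.1.1 - p.1.2⟫ with hG
  have hGcont : Continuous G := by
    apply Continuous.inner
    · exact (hHcont.comp (((continuous_fst.comp continuous_fst).prodMk continuous_snd))).sub
        (hHcont.comp (((continuous_snd.comp continuous_fst).prodMk continuous_snd)))
    · exact (continuous_fst.comp continuous_fst).sub (continuous_snd.comp continuous_fst)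
  have hGbound : ∀ w : EuclideanSpace ℝ (Fin d) × EuclideanSpace ℝ (Fin d),
      ∀ y : EuclideanSpace ℝ (Fin q), |G (w, y)| ≤ KH * ‖w.1 - w.2‖ ^ 2 := by
    intro w y
    have h1 : |G (w, y)| ≤ ‖H w.1 y - H w.2 y‖ * ‖w.1 - w.2‖ := abs_real_inner_le_norm _ _
    have h2 := mul_le_mul_of_nonneg_right (hHθ w.1 w.2 y) (norm_nonneg (w.1 - w.2))
    calc |G (w, y)| ≤ ‖H w.1 y - H w.2 y‖ * ‖w.1 - w.2‖ := h1
      _ ≤ KH * ‖w.1 - w.2‖ * ‖w.1 - w.2‖ := h2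
      _ = KH * ‖w.1 - w.2‖ ^ 2 := by ring
  have hmap : μ.map (fun ω => ((A ω, B ω), Yn ω)) = ρ.prod ν :=
    (indepFun_iff_map_prod_eq_prod_map_map hAB.aemeasurable hYn.aemeasurable).mp hindep
  have hS : ρ ({w : EuclideanSpace ℝ (Fin d) × EuclideanSpace ℝ (Fin d) | ‖w.1 - w.2‖ ≤ C}ᶜ)
      = 0 := by
    rw [hρdef, Measure.map_apply hAB]
    · convert measure_empty (μ := μ)
      ext ω
      simp only [Set.mem_preimage, Set.mem_compl_iff, Set.mem_setOf_eq,
        Set.mem_empty_iff_false, iff_false, not_not]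
      exact hCb ω
    · exact (measurableSet_le
        (continuous_norm.comp (continuous_fst.sub continuous_snd)).measurable
        measurable_const).compl
  have hprodInt : Integrable G (ρ.prod ν) := by
    refine (integrable_const (KH * C ^ 2)).mono' hGcont.aestronglyMeasurable ?_
    rw [ae_iff]
    refine measure_mono_null (t := ({w : EuclideanSpace ℝ (Fin d) × EuclideanSpace ℝ (Fin d) |
      ‖w.1 - w.2‖ ≤ C}ᶜ) ×ˢ (Set.univ : Set (EuclideanSpace ℝ (Fin q)))) (fun p hp => ?_) ?_
    · refine Set.mem_prod.mpr ⟨?_, Set.mem_univ _⟩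
      simp only [Set.mem_compl_iff, Set.mem_setOf_eq]
      intro hle
      apply hp
      have h1 := hGbound p.1 p.2
      have h2 : KH * ‖p.1.1 - p.1.2‖ ^ 2 ≤ KH * C ^ 2 := by
        have h0 := norm_nonneg (p.1.1 - p.1.2)
        have hsq : ‖p.1.1 - p.1.2‖ ^ 2 ≤ C ^ 2 := by nlinarith
        exact mul_le_mul_of_nonneg_left hsq hKH.le
      simp only [Real.norm_eq_abs]
      calc |G (p.1, p.2)| ≤ KH * ‖p.1.1 - p.1.2‖ ^ 2 := h1
        _ ≤ KH * C ^ 2 := h2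
    · rw [Measure.prod_prod, hS, zero_mul]
  have I1 : ∫ ω, G ((A ω, B ω), Yn ω) ∂μ = ∫ p, G p ∂(ρ.prod ν) := by
    rw [← hmap, integral_map (hAB.prodMk hYn).aemeasurable hGcont.aestronglyMeasurable]
  have hinner : ∀ w : EuclideanSpace ℝ (Fin d) × EuclideanSpace ℝ (Fin d),
      ∫ y, G (w, y) ∂ν = ⟪h w.1 - h w.2, w.1 - w.2⟫ := by
    intro w
    have e1 : ∫ y, G (w, y) ∂ν = ∫ ω, G (w, Yn ω) ∂μ :=
      integral_map hYn.aemeasurable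
        (hGcont.comp (Continuous.prodMk_right w)).aestronglyMeasurable
    rw [e1]
    have e2 : ∀ ω, G (w, Yn ω) = ⟪w.1 - w.2, H w.1 (Yn ω) - H w.2 (Yn ω)⟫ := by
      intro ω; rw [hG]; exact real_inner_comm _ _
    simp_rw [e2]
    rw [integral_inner (hIntn w.1 w.2), hν]
    exact real_inner_comm _ _
  have I2 : ∫ p, G p ∂(ρ.prod ν) = ∫ w, ⟪h w.1 - h w.2, w.1 - w.2⟫ ∂ρ := by
    rw [integral_prod _ hprodInt]
    exact integral_congr_ae (Filter.Eventually.of_forall fun w => hinner w)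
  have I3 : ∫ w, ⟪h w.1 - h w.2, w.1 - w.2⟫ ∂ρ
      = ∫ ω, ⟪h (A ω) - h (B ω), A ω - B ω⟫ ∂μ := by
    rw [hρdef]
    exact integral_map hAB.aemeasurable
      (((hcont.comp continuous_fst).sub (hcont.comp continuous_snd)).inner
        (continuous_fst.sub continuous_snd)).aestronglyMeasurable
  have hΔmeas : Measurable fun ω => A ω - B ω := hA.sub hB
  have hΔsqmeas : Measurable fun ω => ‖A ω - B ω‖ ^ 2 := hΔmeas.norm.pow_const 2
  have hIntΔsq : Integrable (fun ω => ‖A ω - B ω‖ ^ 2) μ := by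
    refine aux_integrable_bdd μ hΔsqmeas.aestronglyMeasurable (C ^ 2) fun ω => ?_
    have := hCb ω; have := norm_nonneg (A ω - B ω)
    simp only [Real.norm_eq_abs, abs_pow, abs_norm]
    nlinarith
  have hGomeas : Measurable fun ω => G ((A ω, B ω), Yn ω) :=
    hGcont.measurable.comp (hAB.prodMk hYn)
  have hIntGo : Integrable (fun ω => G ((A ω, B ω), Yn ω)) μ := by
    refine aux_integrable_bdd μ hGomeas.aestronglyMeasurable (KH * C ^ 2) fun ω => ?_
    have h1 := hGbound (A ω, B ω) (Yn ω)
    have h2 := hCb ω; have h3 := norm_nonneg (A ω - B ω)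
    simp only [Real.norm_eq_abs]
    calc |G ((A ω, B ω), Yn ω)| ≤ KH * ‖A ω - B ω‖ ^ 2 := h1
      _ ≤ KH * C ^ 2 := by
        have hsq : ‖A ω - B ω‖ ^ 2 ≤ C ^ 2 := by nlinarith
        exact mul_le_mul_of_nonneg_left hsq hKH.le
  have hInnerMeas : Measurable fun ω => ⟪h (A ω) - h (B ω), A ω - B ω⟫ :=
    Measurable.inner ((hcont.measurable.comp hA).sub (hcont.measurable.comp hB)) hΔmeas
  have hIntInner : Integrable (fun ω => ⟪h (A ω) - h (B ω), A ω - B ω⟫) μ := by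
    refine aux_integrable_bdd μ hInnerMeas.aestronglyMeasurable (KH * C ^ 2) fun ω => ?_
    have h1 : |⟪h (A ω) - h (B ω), A ω - B ω⟫| ≤ ‖h (A ω) - h (B ω)‖ * ‖A ω - B ω‖ :=
      abs_real_inner_le_norm _ _
    have h2 := hhLip (A ω) (B ω)
    have h3 := hCb ω; have h4 := norm_nonneg (A ω - B ω)
    simp only [Real.norm_eq_abs]
    calc |⟪h (A ω) - h (B ω), A ω - B ω⟫| ≤ ‖h (A ω) - h (B ω)‖ * ‖A ω - B ω‖ := h1
      _ ≤ (KH * ‖A ω - B ω‖) * ‖A ω - B ω‖ := mul_le_mul_of_nonneg_right h2 h4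
      _ = KH * ‖A ω - B ω‖ ^ 2 := by ring
      _ ≤ KH * C ^ 2 := by
        have hsq : ‖A ω - B ω‖ ^ 2 ≤ C ^ 2 := by nlinarith
        exact mul_le_mul_of_nonneg_left hsq hKH.le
  have I4 : lam * ∫ ω, ‖A ω - B ω‖ ^ 2 ∂μ ≤ ∫ ω, G ((A ω, B ω), Yn ω) ∂μ := by
    rw [I1, I2, I3, ← integral_const_mul]
    exact integral_mono (hIntΔsq.const_mul lam) hIntInner fun ω => hmono (A ω) (B ω)
  have hpt : ∀ ω, ‖(A ω - g • H (A ω) (Yn ω)) - (B ω - g • H (B ω) (Yn ω))‖ ^ 2 ≤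
      (1 + KH ^ 2 * g ^ 2) * ‖A ω - B ω‖ ^ 2 - 2 * g * G ((A ω, B ω), Yn ω) := by
    intro ω
    rw [aux_sub_sub, norm_sub_sq_real]
    have e1 : ⟪A ω - B ω, g • (H (A ω) (Yn ω) - H (B ω) (Yn ω))⟫
        = g * ⟪A ω - B ω, H (A ω) (Yn ω) - H (B ω) (Yn ω)⟫ := real_inner_smul_right _ _ _
    have e2 : ‖g • (H (A ω) (Yn ω) - H (B ω) (Yn ω))‖ ^ 2
        = g ^ 2 * ‖H (A ω) (Yn ω) - H (B ω) (Yn ω)‖ ^ 2 := by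
      rw [norm_smul, mul_pow, Real.norm_eq_abs, sq_abs]
    have e3 : G ((A ω, B ω), Yn ω)
        = ⟪A ω - B ω, H (A ω) (Yn ω) - H (B ω) (Yn ω)⟫ := real_inner_comm _ _
    have e4 := hHθ (A ω) (B ω) (Yn ω)
    have h5 : ‖H (A ω) (Yn ω) - H (B ω) (Yn ω)‖ ^ 2 ≤ KH ^ 2 * ‖A ω - B ω‖ ^ 2 := by
      nlinarith [norm_nonneg (H (A ω) (Yn ω) - H (B ω) (Yn ω)), norm_nonneg (A ω - B ω)]
    rw [e1, e2, e3]
    nlinarith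
  have hXmeas : Measurable fun ω =>
      (A ω - g • H (A ω) (Yn ω)) - (B ω - g • H (B ω) (Yn ω)) :=
    (hA.sub ((hHcont.measurable.comp (hA.prodMk hYn)).const_smul g)).sub
      (hB.sub ((hHcont.measurable.comp (hB.prodMk hYn)).const_smul g))
  have hIntL : Integrable
      (fun ω => ‖(A ω - g • H (A ω) (Yn ω)) - (B ω - g • H (B ω) (Yn ω))‖ ^ 2) μ := by
    refine aux_integrable_bdd μ (hXmeas.norm.pow_const 2).aestronglyMeasurable
      (((1 + g * KH) * C) ^ 2) fun ω => ?_
    have e0 : (A ω - g • H (A ω) (Yn ω)) - (B ω - g • H (B ω) (Yn ω))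
        = (A ω - B ω) - g • (H (A ω) (Yn ω) - H (B ω) (Yn ω)) := aux_sub_sub _ _ _ _ _
    have hb : ‖(A ω - g • H (A ω) (Yn ω)) - (B ω - g • H (B ω) (Yn ω))‖
        ≤ (1 + g * KH) * C := by
      rw [e0]
      have h1 : ‖(A ω - B ω) - g • (H (A ω) (Yn ω) - H (B ω) (Yn ω))‖
          ≤ ‖A ω - B ω‖ + ‖g • (H (A ω) (Yn ω) - H (B ω) (Yn ω))‖ := norm_sub_le _ _
      have h2 : ‖g • (H (A ω) (Yn ω) - H (B ω) (Yn ω))‖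
          = g * ‖H (A ω) (Yn ω) - H (B ω) (Yn ω)‖ := by
        rw [norm_smul, Real.norm_eq_abs, abs_of_pos hg]
      have h3 := hHθ (A ω) (B ω) (Yn ω)
      have h4 := hCb ω
      have h5 := norm_nonneg (A ω - B ω)
      nlinarith [mul_le_mul_of_nonneg_left h4 (mul_nonneg hg.le hKH.le),
        mul_le_mul_of_nonneg_left h3 hg.le]
    have hnn := norm_nonneg ((A ω - g • H (A ω) (Yn ω)) - (B ω - g • H (B ω) (Yn ω)))
    simp only [Real.norm_eq_abs, abs_pow, abs_norm]
    exact pow_le_pow_left₀ hnn hb 2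
  have hIntR : Integrable (fun ω =>
      (1 + KH ^ 2 * g ^ 2) * ‖A ω - B ω‖ ^ 2 - 2 * g * G ((A ω, B ω), Yn ω)) μ :=
    (hIntΔsq.const_mul _).sub (hIntGo.const_mul _)
  have main := integral_mono hIntL hIntR hpt
  rw [integral_sub (hIntΔsq.const_mul _) (hIntGo.const_mul _),
    integral_const_mul, integral_const_mul] at main
  have hInonneg : 0 ≤ ∫ ω, ‖A ω - B ω‖ ^ 2 ∂μ := integral_nonneg fun ω => sq_nonneg _
  nlinarith [I4]

lemma aux_inner_mono {d : ℕ} (h : EuclideanSpace ℝ (Fin d) → EuclideanSpace ℝ (Fin d))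
    (hC1 : ContDiff ℝ 1 h) (lam : ℝ)
    (hattract : ∀ θ' ξ, lam * ‖ξ‖ ^ 2 ≤ ⟪fderiv ℝ h θ' ξ, ξ⟫)
    (a b : EuclideanSpace ℝ (Fin d)) :
    lam * ‖a - b‖ ^ 2 ≤ ⟪h a - h b, a - b⟫ := by
  have hdiff : Differentiable ℝ h := hC1.differentiable one_ne_zero
  set v := a - b with hv
  set φ : ℝ → ℝ := fun t => ⟪h (b + t • v), v⟫ - t * (lam * ‖v‖ ^ 2) with hφ
  have key : ∀ t : ℝ, HasDerivAt φ (⟪fderiv ℝ h (b + t • v) v, v⟫ - lam * ‖v‖ ^ 2) t := by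
    intro t
    have h1 : HasDerivAt (fun t : ℝ => b + t • v) v t := by
      simpa using ((hasDerivAt_id t).smul_const v).const_add b
    have h2 : HasDerivAt (fun t : ℝ => h (b + t • v)) (fderiv ℝ h (b + t • v) v) t :=
      (hdiff (b + t • v)).hasFDerivAt.comp_hasDerivAt t h1
    have h3 : HasDerivAt (fun t : ℝ => ⟪h (b + t • v), v⟫) (⟪fderiv ℝ h (b + t • v) v, v⟫) t := by
      simpa using h2.inner ℝ (hasDerivAt_const t v)
    exact h3.sub (hasDerivAt_mul_const _)
  have hmono : Monotone φ := by
    apply monotone_of_deriv_nonneg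
    · exact fun t => (key t).differentiableAt
    · intro t
      rw [(key t).deriv]
      have := hattract (b + t • v) v
      linarith
  have h01 := hmono (zero_le_one)
  have e0 : φ 0 = ⟪h b, v⟫ := by simp [hφ]
  have e1 : φ 1 = ⟪h a, v⟫ - lam * ‖v‖ ^ 2 := by
    have hba : b + v = a := by rw [hv]; abel
    simp only [hφ, one_smul, one_mul, hba]
  rw [e0, e1] at h01
  rw [inner_sub_left]
  linarith

set_option maxHeartbeats 2000000 in
/-- Lipschitz control in `y`, uniformly in `θ`, of the functions
`f_i^γ(θ,y) = v_i(θ - γ_i H(θ,y))` where `v_i(θ) = E[|θ_n^{θ,i} - θ*|]`. -/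
theorem robbins_monro_fn_lipschitz
    {Ω : Type*} [m0 : MeasurableSpace Ω] (μ : Measure Ω) [IsProbabilityMeasure μ]
    {d q : ℕ}
    (Y : ℕ → Ω → EuclideanSpace ℝ (Fin q)) (hYmeas : ∀ i, Measurable (Y i))
    (hiid : iIndepFun Y μ)
    (hident : ∀ i, IdentDistrib (Y i) (Y 1) μ μ)
    (H : EuclideanSpace ℝ (Fin d) → EuclideanSpace ℝ (Fin q) → EuclideanSpace ℝ (Fin d))
    (KH : ℝ) (hKH : 0 < KH)
    -- (HL)
    (hHlip : LipschitzWith (Real.toNNReal KH)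
      (fun p : EuclideanSpace ℝ (Fin d) × EuclideanSpace ℝ (Fin q) => H p.1 p.2))
    (h : EuclideanSpace ℝ (Fin d) → EuclideanSpace ℝ (Fin d))
    (hdef : ∀ θ', h θ' = ∫ ω, H θ' (Y 1 ω) ∂μ)
    -- (HUA)
    (hC1 : ContDiff ℝ 1 h) (lam : ℝ) (hlam : 0 < lam)
    (hattract : ∀ θ' ξ, lam * ‖ξ‖ ^ 2 ≤ ⟪fderiv ℝ h θ' ξ, ξ⟫)
    (θstar : EuclideanSpace ℝ (Fin d)) (hroot : h θstar = 0)
    (γ : ℕ → ℝ) (hγpos : ∀ k, 1 ≤ k → 0 < γ k)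
    (i n : ℕ) (h1i : 1 ≤ i) (hin : i ≤ n)
    -- `Φ z` is the algorithm started from `z` at step `i`
    (Φ : EuclideanSpace ℝ (Fin d) → ℕ → Ω → EuclideanSpace ℝ (Fin d))
    (hinit : ∀ z ω, Φ z i ω = z)
    (hrec : ∀ z j ω, i ≤ j → Φ z (j + 1) ω = Φ z j ω - γ (j + 1) • H (Φ z j ω) (Y (j + 1) ω)) :
    ∀ (θ : EuclideanSpace ℝ (Fin d)) (y y' : EuclideanSpace ℝ (Fin q)),
      |(∫ ω, ‖Φ (θ - γ i • H θ y) n ω - θstar‖ ∂μ) -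
        ∫ ω, ‖Φ (θ - γ i • H θ y') n ω - θstar‖ ∂μ| ≤
      Real.sqrt
        ((∏ k ∈ Finset.range n, (1 - 2 * lam * γ (k + 1) + KH ^ 2 * γ (k + 1) ^ 2)) /
          ∏ k ∈ Finset.range i, (1 - 2 * lam * γ (k + 1) + KH ^ 2 * γ (k + 1) ^ 2)) *
        γ i * KH * ‖y - y'‖ := by
  classical
  intro θ y y'
  have hK0 : (0:ℝ) ≤ KH := hKH.le
  have hγi : 0 < γ i := hγpos i h1i
  have hRHSnn : 0 ≤ Real.sqrt
        ((∏ k ∈ Finset.range n, (1 - 2 * lam * γ (k + 1) + KH ^ 2 * γ (k + 1) ^ 2)) /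
          ∏ k ∈ Finset.range i, (1 - 2 * lam * γ (k + 1) + KH ^ 2 * γ (k + 1) ^ 2)) *
        γ i * KH * ‖y - y'‖ :=
    mul_nonneg (mul_nonneg (mul_nonneg (Real.sqrt_nonneg _) hγi.le) hK0) (norm_nonneg _)
  rcases Nat.eq_zero_or_pos d with hd0 | hd
  · subst hd0
    haveI : Subsingleton (EuclideanSpace ℝ (Fin 0)) := ⟨fun a b => by ext j; exact Fin.elim0 j⟩
    have hzz : θ - γ i • H θ y = θ - γ i • H θ y' := Subsingleton.elim _ _
    rw [hzz, sub_self, abs_zero]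
    exact hRHSnn
  -- basic Lipschitz consequences
  have hHpair : ∀ (p p' : EuclideanSpace ℝ (Fin d) × EuclideanSpace ℝ (Fin q)),
      ‖H p.1 p.2 - H p'.1 p'.2‖ ≤ KH * max ‖p.1 - p'.1‖ ‖p.2 - p'.2‖ := by
    intro p p'
    have h0 := hHlip.dist_le_mul p p'
    rw [Real.coe_toNNReal _ hK0] at h0
    simpa [Prod.dist_eq, dist_eq_norm, Prod.norm_def] using h0
  have hHθ : ∀ a b yy, ‖H a yy - H b yy‖ ≤ KH * ‖a - b‖ := by
    intro a b yy
    have := hHpair (a, yy) (b, yy)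
    simpa [max_eq_left (norm_nonneg (a - b))] using this
  have hHy : ∀ a yy yy', ‖H a yy - H a yy'‖ ≤ KH * ‖yy - yy'‖ := by
    intro a yy yy'
    have := hHpair (a, yy) (a, yy')
    simpa [max_eq_right (norm_nonneg (yy - yy'))] using this
  have hHcont : Continuous fun p : EuclideanSpace ℝ (Fin d) × EuclideanSpace ℝ (Fin q) =>
      H p.1 p.2 := hHlip.continuous
  have hcont_h : Continuous h := hC1.continuous
  have hξ : ∃ ξ : EuclideanSpace ℝ (Fin d), ‖ξ‖ = 1 :=
    ⟨EuclideanSpace.single ⟨0, hd⟩ (1:ℝ), by simp⟩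
  -- integrability of H a (Y 1 ·)
  have hInt : ∀ a, Integrable (fun ω => H a (Y 1 ω)) μ := by
    by_contra hni
    push_neg at hni
    obtain ⟨a₀, ha₀⟩ := hni
    have hall : ∀ b, ¬ Integrable (fun ω => H b (Y 1 ω)) μ := by
      intro b hb
      apply ha₀
      have hdm : Measurable fun ω => H a₀ (Y 1 ω) - H b (Y 1 ω) :=
        ((hHcont.measurable.comp (measurable_const.prodMk (hYmeas 1)))).sub
          ((hHcont.measurable.comp (measurable_const.prodMk (hYmeas 1))))
      have hdi : Integrable (fun ω => H a₀ (Y 1 ω) - H b (Y 1 ω)) μ :=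
        aux_integrable_bdd μ hdm.aestronglyMeasurable (KH * ‖a₀ - b‖)
          (fun ω => hHθ a₀ b (Y 1 ω))
      have := hdi.add hb
      exact this.congr (Filter.Eventually.of_forall fun ω => by
        simp only [Pi.add_apply]; abel)
    have hzero : ∀ b, h b = 0 := fun b => by rw [hdef b, integral_undef (hall b)]
    obtain ⟨ξ, hξ1⟩ := hξ
    have h0 := hattract 0 ξ
    have hh0 : h = fun _ => 0 := funext hzero
    rw [hh0] at h0
    simp only [fderiv_fun_const, Pi.zero_apply, ContinuousLinearMap.zero_apply,
      inner_zero_left] at h0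
    rw [hξ1] at h0
    nlinarith
  have hIntd : ∀ a b, Integrable (fun ω => H a (Y 1 ω) - H b (Y 1 ω)) μ :=
    fun a b => (hInt a).sub (hInt b)
  have hmono := aux_inner_mono h hC1 lam hattract
  have hhLip : ∀ a b, ‖h a - h b‖ ≤ KH * ‖a - b‖ := by
    intro a b
    rw [hdef a, hdef b, ← integral_sub (hInt a) (hInt b)]
    calc ‖∫ ω, (H a (Y 1 ω) - H b (Y 1 ω)) ∂μ‖
        ≤ ∫ ω, ‖H a (Y 1 ω) - H b (Y 1 ω)‖ ∂μ := norm_integral_le_integral_norm _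
      _ ≤ ∫ _ω, KH * ‖a - b‖ ∂μ :=
          integral_mono (hIntd a b).norm (integrable_const _) (fun ω => hHθ a b (Y 1 ω))
      _ = KH * ‖a - b‖ := by simp
  have hlamK : lam ≤ KH := by
    obtain ⟨ξ, hξ1⟩ := hξ
    have h1 := hmono ξ 0
    have h2 := hhLip ξ 0
    have h3 := real_inner_le_norm (h ξ - h 0) (ξ - 0)
    rw [sub_zero] at h1 h2 h3
    rw [hξ1] at h1 h2 h3
    nlinarith
  have hfac : ∀ k : ℕ, 1 ≤ k → 0 ≤ 1 - 2 * lam * γ k + KH ^ 2 * γ k ^ 2 := by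
    intro k hk
    have hγ := hγpos k hk
    nlinarith [sq_nonneg (1 - KH * γ k), mul_nonneg (sub_nonneg.mpr hlamK) hγ.le]
  -- identical distribution transfer
  have hident' : ∀ (m : ℕ) (a b : EuclideanSpace ℝ (Fin d)),
      Integrable (fun ω => H a (Y m ω) - H b (Y m ω)) μ ∧
      ∫ ω, (H a (Y m ω) - H b (Y m ω)) ∂μ = h a - h b := by
    intro m a b
    have hu : Measurable fun yy => H a yy - H b yy :=
      ((hHcont.comp (Continuous.prodMk_right a)).sub
        (hHcont.comp (Continuous.prodMk_right b))).measurable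
    have hid : IdentDistrib (fun ω => H a (Y m ω) - H b (Y m ω))
        (fun ω => H a (Y 1 ω) - H b (Y 1 ω)) μ μ := by
      have := (hident m).comp hu
      exact this
    refine ⟨hid.integrable_iff.mpr (hIntd a b), ?_⟩
    rw [hid.integral_eq, integral_sub (hInt a) (hInt b), ← hdef a, ← hdef b]
  -- the two initial points
  set z := θ - γ i • H θ y with hzdef
  set z' := θ - γ i • H θ y' with hz'def
  have hzz' : ‖z - z'‖ ≤ γ i * (KH * ‖y - y'‖) := by
    have hz : z - z' = γ i • (H θ y' - H θ y) := by
      rw [hzdef, hz'def, smul_sub]; abel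
    rw [hz, norm_smul, Real.norm_eq_abs, abs_of_pos hγi]
    have h1 : ‖H θ y' - H θ y‖ ≤ KH * ‖y - y'‖ := by
      rw [norm_sub_rev]
      exact hHy θ y y'
    exact mul_le_mul_of_nonneg_left h1 hγi.le
  -- factorization of the pair process through the noise
  have hfact : ∀ j, i ≤ j → ∃ g : ({k // k ∈ Finset.Icc (i+1) j} → EuclideanSpace ℝ (Fin q)) →
      EuclideanSpace ℝ (Fin d) × EuclideanSpace ℝ (Fin d), Measurable g ∧
      ∀ ω, (Φ z j ω, Φ z' j ω) = g (fun k => Y k.1 ω) := by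
    intro j hj
    induction j, hj using Nat.le_induction with
    | base =>
      exact ⟨fun _ => (z, z'), measurable_const, fun ω => by rw [hinit, hinit]⟩
    | succ j hj ih =>
      obtain ⟨g, hgmeas, hgeq⟩ := ih
      have hsub : ∀ k : ℕ, k ∈ Finset.Icc (i+1) j → k ∈ Finset.Icc (i+1) (j+1) := by
        intro k hk; rw [Finset.mem_Icc] at hk ⊢; omega
      have hmem : j + 1 ∈ Finset.Icc (i+1) (j+1) := by rw [Finset.mem_Icc]; omega
      refine ⟨fun v =>
        ((g (fun k => v ⟨k.1, hsub k.1 k.2⟩)).1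
            - γ (j+1) • H (g (fun k => v ⟨k.1, hsub k.1 k.2⟩)).1 (v ⟨j+1, hmem⟩),
         (g (fun k => v ⟨k.1, hsub k.1 k.2⟩)).2
            - γ (j+1) • H (g (fun k => v ⟨k.1, hsub k.1 k.2⟩)).2 (v ⟨j+1, hmem⟩)), ?_, ?_⟩
      · have hres : Measurable fun (v : {k // k ∈ Finset.Icc (i+1) (j+1)} →
            EuclideanSpace ℝ (Fin q)) (k : {k // k ∈ Finset.Icc (i+1) j}) =>
            v ⟨k.1, hsub k.1 k.2⟩ := measurable_pi_lambda _ fun k => measurable_pi_apply _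
        have hgv : Measurable fun (v : {k // k ∈ Finset.Icc (i+1) (j+1)} →
            EuclideanSpace ℝ (Fin q)) => g (fun k => v ⟨k.1, hsub k.1 k.2⟩) :=
          hgmeas.comp hres
        have hev : Measurable fun (v : {k // k ∈ Finset.Icc (i+1) (j+1)} →
            EuclideanSpace ℝ (Fin q)) => v ⟨j+1, hmem⟩ := measurable_pi_apply _
        exact ((hgv.fst).sub ((hHcont.measurable.comp ((hgv.fst).prodMk hev)).const_smul (γ (j+1)))).prodMk
          ((hgv.snd).sub ((hHcont.measurable.comp ((hgv.snd).prodMk hev)).const_smul (γ (j+1))))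
      · intro ω
        have h1 : Φ z j ω = (g fun k => Y k.1 ω).1 := by rw [← hgeq ω]
        have h2 : Φ z' j ω = (g fun k => Y k.1 ω).2 := by rw [← hgeq ω]
        rw [hrec z j ω hj, hrec z' j ω hj, h1, h2]
  have hWmeas : ∀ j, i ≤ j → Measurable fun ω => (Φ z j ω, Φ z' j ω) := by
    intro j hj
    obtain ⟨g, hgmeas, hgeq⟩ := hfact j hj
    have : (fun ω => (Φ z j ω, Φ z' j ω)) = fun ω => g (fun k => Y k.1 ω) := funext hgeq
    rw [this]
    exact hgmeas.comp (measurable_pi_lambda _ fun k => hYmeas k.1)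
  -- independence
  have hindepj : ∀ j, i ≤ j →
      IndepFun (fun ω => (Φ z j ω, Φ z' j ω)) (Y (j+1)) μ := by
    intro j hj
    obtain ⟨g, hgmeas, hgeq⟩ := hfact j hj
    have hdisj : Disjoint (Finset.Icc (i+1) j) ({j+1} : Finset ℕ) := by
      rw [Finset.disjoint_singleton_right, Finset.mem_Icc]; omega
    have hbase := hiid.indepFun_finset (Finset.Icc (i+1) j) {j+1} hdisj hYmeas
    have hev : Measurable fun (v : {k // k ∈ ({j+1} : Finset ℕ)} → EuclideanSpace ℝ (Fin q)) =>
      v ⟨j+1, Finset.mem_singleton_self (j+1)⟩ := measurable_pi_apply _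
    have hcomp := hbase.comp hgmeas hev
    have e1 : (fun ω => (Φ z j ω, Φ z' j ω)) =
        g ∘ (fun a (k : {k // k ∈ Finset.Icc (i+1) j}) => Y k.1 a) := funext hgeq
    have e2 : Y (j+1) = (fun (v : {k // k ∈ ({j+1} : Finset ℕ)} → EuclideanSpace ℝ (Fin q)) =>
        v ⟨j+1, Finset.mem_singleton_self (j+1)⟩) ∘
        (fun a (k : {k // k ∈ ({j+1} : Finset ℕ)}) => Y k.1 a) := rfl
    rw [e1, e2]
    exact hcomp
  -- uniform boundedness of the difference
  have hbdd : ∀ j, i ≤ j → ∃ C, 0 ≤ C ∧ ∀ ω, ‖Φ z j ω - Φ z' j ω‖ ≤ C := by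
    intro j hj
    induction j, hj using Nat.le_induction with
    | base => exact ⟨‖z - z'‖, norm_nonneg _, fun ω => by rw [hinit, hinit]⟩
    | succ j hj ih =>
      obtain ⟨C, hC0, hCb⟩ := ih
      refine ⟨(1 + γ (j+1) * KH) * C, mul_nonneg (by nlinarith [hγpos (j+1) (by omega : 1 ≤ j+1)]) hC0, fun ω => ?_⟩
      rw [hrec z j ω hj, hrec z' j ω hj, aux_sub_sub]
      have h1 := norm_sub_le (Φ z j ω - Φ z' j ω)
        (γ (j+1) • (H (Φ z j ω) (Y (j+1) ω) - H (Φ z' j ω) (Y (j+1) ω)))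
      have h2 : ‖γ (j+1) • (H (Φ z j ω) (Y (j+1) ω) - H (Φ z' j ω) (Y (j+1) ω))‖
          = γ (j+1) * ‖H (Φ z j ω) (Y (j+1) ω) - H (Φ z' j ω) (Y (j+1) ω)‖ := by
        rw [norm_smul, Real.norm_eq_abs, abs_of_pos (hγpos (j+1) (by omega))]
      have h3 := hHθ (Φ z j ω) (Φ z' j ω) (Y (j+1) ω)
      have h4 := hCb ω
      have h5 := norm_nonneg (Φ z j ω - Φ z' j ω)
      have hγj := hγpos (j+1) (by omega)
      nlinarith [mul_le_mul_of_nonneg_left h4 (mul_nonneg hγj.le hK0),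
        mul_le_mul_of_nonneg_left h3 hγj.le]
  -- one-step contraction
  have hstepj : ∀ j, i ≤ j →
      ∫ ω, ‖Φ z (j+1) ω - Φ z' (j+1) ω‖ ^ 2 ∂μ ≤
        (1 - 2 * lam * γ (j+1) + KH ^ 2 * γ (j+1) ^ 2) * ∫ ω, ‖Φ z j ω - Φ z' j ω‖ ^ 2 ∂μ := by
    intro j hj
    obtain ⟨C, hC0, hCb⟩ := hbdd j hj
    have key := aux_step μ H KH hKH hHθ hHcont h hcont_h hhLip lam hmono (Y (j+1))
      (hYmeas (j+1)) (fun a b => (hident' (j+1) a b).1) (fun a b => (hident' (j+1) a b).2)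
      (Φ z j) (Φ z' j) (hWmeas j hj) C hC0 hCb (hindepj j hj) (γ (j+1))
      (hγpos (j+1) (by omega))
    have e : ∀ ω, (Φ z j ω - γ (j+1) • H (Φ z j ω) (Y (j+1) ω))
        - (Φ z' j ω - γ (j+1) • H (Φ z' j ω) (Y (j+1) ω))
        = Φ z (j+1) ω - Φ z' (j+1) ω := fun ω => by rw [hrec z j ω hj, hrec z' j ω hj]
    simp_rw [e] at key
    exact key
  -- iterate
  have hiter : ∀ j, i ≤ j → ∫ ω, ‖Φ z j ω - Φ z' j ω‖ ^ 2 ∂μ ≤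
      (∏ k ∈ Finset.Ico i j, (1 - 2 * lam * γ (k+1) + KH ^ 2 * γ (k+1) ^ 2)) * ‖z - z'‖ ^ 2 := by
    intro j hj
    induction j, hj using Nat.le_induction with
    | base =>
      simp only [Finset.Ico_self, Finset.prod_empty, one_mul]
      have : ∀ ω, ‖Φ z i ω - Φ z' i ω‖ ^ 2 = ‖z - z'‖ ^ 2 := fun ω => by rw [hinit, hinit]
      rw [integral_congr_ae (Filter.Eventually.of_forall this)]
      simp
    | succ j hj ih =>
      have hf := hfac (j+1) (by omega)
      calc ∫ ω, ‖Φ z (j+1) ω - Φ z' (j+1) ω‖ ^ 2 ∂μ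
          ≤ (1 - 2 * lam * γ (j+1) + KH ^ 2 * γ (j+1) ^ 2) *
            ∫ ω, ‖Φ z j ω - Φ z' j ω‖ ^ 2 ∂μ := hstepj j hj
        _ ≤ (1 - 2 * lam * γ (j+1) + KH ^ 2 * γ (j+1) ^ 2) *
            ((∏ k ∈ Finset.Ico i j, (1 - 2 * lam * γ (k+1) + KH ^ 2 * γ (k+1) ^ 2)) *
              ‖z - z'‖ ^ 2) := mul_le_mul_of_nonneg_left ih hf
        _ = (∏ k ∈ Finset.Ico i (j+1), (1 - 2 * lam * γ (k+1) + KH ^ 2 * γ (k+1) ^ 2)) *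
              ‖z - z'‖ ^ 2 := by rw [Finset.prod_Ico_succ_top hj]; ring
  -- L¹ ≤ L² at time n
  obtain ⟨Cn, hCn0, hCnb⟩ := hbdd n hin
  have hWn := hWmeas n hin
  have hΔnmeas : Measurable fun ω => Φ z n ω - Φ z' n ω := hWn.fst.sub hWn.snd
  have hIntΔn : Integrable (fun ω => ‖Φ z n ω - Φ z' n ω‖) μ :=
    aux_integrable_bdd μ hΔnmeas.norm.aestronglyMeasurable Cn
      (fun ω => by simpa using hCnb ω)
  have hIntΔn2 : Integrable (fun ω => ‖Φ z n ω - Φ z' n ω‖ ^ 2) μ := by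
    refine aux_integrable_bdd μ (hΔnmeas.norm.pow_const 2).aestronglyMeasurable (Cn ^ 2)
      (fun ω => ?_)
    have := hCnb ω; have := norm_nonneg (Φ z n ω - Φ z' n ω)
    simp only [Real.norm_eq_abs, abs_pow, abs_norm]
    nlinarith
  set J := ∫ ω, ‖Φ z n ω - Φ z' n ω‖ ∂μ with hJdef
  have hJnn : 0 ≤ J := integral_nonneg fun ω => norm_nonneg _
  have hJsq : J ^ 2 ≤ ∫ ω, ‖Φ z n ω - Φ z' n ω‖ ^ 2 ∂μ := by
    have hvar : 0 ≤ ∫ ω, (‖Φ z n ω - Φ z' n ω‖ - J) ^ 2 ∂μ :=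
      integral_nonneg fun ω => sq_nonneg _
    have he : ∀ ω, (‖Φ z n ω - Φ z' n ω‖ - J) ^ 2
        = ‖Φ z n ω - Φ z' n ω‖ ^ 2 - (2 * J) * ‖Φ z n ω - Φ z' n ω‖ + J ^ 2 := fun ω => by ring
    have hint1 : Integrable (fun ω => ‖Φ z n ω - Φ z' n ω‖ ^ 2
        - (2 * J) * ‖Φ z n ω - Φ z' n ω‖) μ := hIntΔn2.sub (hIntΔn.const_mul (2*J))
    have hint2 : Integrable (fun ω => (2 * J) * ‖Φ z n ω - Φ z' n ω‖) μ :=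
      hIntΔn.const_mul (2*J)
    rw [integral_congr_ae (Filter.Eventually.of_forall he),
      integral_add hint1 (integrable_const _),
      integral_sub hIntΔn2 hint2, integral_const_mul] at hvar
    simp only [integral_const, probReal_univ, ENNReal.toReal_one, one_smul, smul_eq_mul] at hvar
    rw [← hJdef] at hvar
    nlinarith
  -- compare the two expectations with E‖Δ_n‖
  have habs : |(∫ ω, ‖Φ z n ω - θstar‖ ∂μ) - ∫ ω, ‖Φ z' n ω - θstar‖ ∂μ| ≤ J := by
    have hfmeas : Measurable fun ω => ‖Φ z n ω - θstar‖ :=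
      (hWn.fst.sub measurable_const).norm
    have hgmeas : Measurable fun ω => ‖Φ z' n ω - θstar‖ :=
      (hWn.snd.sub measurable_const).norm
    have hfg : ∀ ω, |‖Φ z n ω - θstar‖ - ‖Φ z' n ω - θstar‖| ≤ ‖Φ z n ω - Φ z' n ω‖ := by
      intro ω
      have := abs_norm_sub_norm_le (Φ z n ω - θstar) (Φ z' n ω - θstar)
      simpa [sub_sub_sub_cancel_right] using this
    have hdint : Integrable (fun ω => ‖Φ z n ω - θstar‖ - ‖Φ z' n ω - θstar‖) μ := by
      refine aux_integrable_bdd μ (hfmeas.sub hgmeas).aestronglyMeasurable Cn (fun ω => ?_)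
      rw [Real.norm_eq_abs]
      exact le_trans (hfg ω) (hCnb ω)
    by_cases hfi : Integrable (fun ω => ‖Φ z n ω - θstar‖) μ
    · have hgi : Integrable (fun ω => ‖Φ z' n ω - θstar‖) μ := by
        have : (fun ω => ‖Φ z' n ω - θstar‖) = fun ω =>
          ‖Φ z n ω - θstar‖ - (‖Φ z n ω - θstar‖ - ‖Φ z' n ω - θstar‖) := by funext ω; ring
        rw [this]; exact hfi.sub hdint
      rw [← integral_sub hfi hgi]
      calc |∫ ω, (‖Φ z n ω - θstar‖ - ‖Φ z' n ω - θstar‖) ∂μ|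
          ≤ ∫ ω, |‖Φ z n ω - θstar‖ - ‖Φ z' n ω - θstar‖| ∂μ := by
            have := norm_integral_le_integral_norm (μ := μ)
              (fun ω => ‖Φ z n ω - θstar‖ - ‖Φ z' n ω - θstar‖)
            simpa [Real.norm_eq_abs] using this
        _ ≤ J := integral_mono hdint.abs hIntΔn hfg
    · have hgi : ¬ Integrable (fun ω => ‖Φ z' n ω - θstar‖) μ := by
        intro hgi
        apply hfi
        have : (fun ω => ‖Φ z n ω - θstar‖) = fun ω =>
          ‖Φ z' n ω - θstar‖ + (‖Φ z n ω - θstar‖ - ‖Φ z' n ω - θstar‖) := by funext ω; ring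
        rw [this]; exact hgi.add hdint
      rw [integral_undef hfi, integral_undef hgi, sub_zero, abs_zero]
      exact hJnn
  -- split on vanishing of the denominator product
  by_cases hPi : (∏ k ∈ Finset.range i, (1 - 2 * lam * γ (k + 1) + KH ^ 2 * γ (k + 1) ^ 2)) = 0
  · -- degenerate case : lam = KH and H does not depend on y
    obtain ⟨k, hk, hk0⟩ := Finset.prod_eq_zero_iff.mp hPi
    have hγk := hγpos (k+1) (by omega)
    have hlamKH : lam = KH := by
      have h1 : KH ≤ lam := by nlinarith [sq_nonneg (1 - KH * γ (k+1))]
      exact le_antisymm hlamK h1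
    have hEq : ∀ a b, h a - h b = KH • (a - b) := by
      intro a b
      have h1 := hmono a b
      rw [hlamKH] at h1
      have h2 := hhLip a b
      have h3 := real_inner_le_norm (h a - h b) (a - b)
      have key : ‖(h a - h b) - KH • (a - b)‖ ^ 2 ≤ 0 := by
        rw [norm_sub_sq_real, real_inner_smul_right]
        have e2 : ‖KH • (a - b)‖ ^ 2 = KH ^ 2 * ‖a - b‖ ^ 2 := by
          rw [norm_smul, mul_pow, Real.norm_eq_abs, sq_abs]
        rw [e2]
        nlinarith [norm_nonneg (h a - h b), norm_nonneg (a - b),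
          mul_le_mul_of_nonneg_left h1 hK0,
          mul_le_mul h2 h2 (norm_nonneg _) (mul_nonneg hK0 (norm_nonneg _))]
      have h4 : ‖(h a - h b) - KH • (a - b)‖ ^ 2 = 0 := le_antisymm key (sq_nonneg _)
      have h5 : (h a - h b) - KH • (a - b) = 0 := by
        rw [pow_eq_zero_iff (two_ne_zero)] at h4
        exact norm_eq_zero.mp h4
      exact sub_eq_zero.mp h5
    have haepair : ∀ a b : EuclideanSpace ℝ (Fin d),
        ∀ᵐ ω ∂μ, H a (Y 1 ω) - H b (Y 1 ω) = KH • (a - b) := by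
      intro a b
      have hnormw : ‖KH • (a - b)‖ = KH * ‖a - b‖ := by
        rw [norm_smul, Real.norm_eq_abs, abs_of_pos hKH]
      have hEX : ∫ ω, (H a (Y 1 ω) - H b (Y 1 ω)) ∂μ = KH • (a - b) := by
        rw [integral_sub (hInt a) (hInt b), ← hdef a, ← hdef b]; exact hEq a b
      have hXmeas : Measurable fun ω => H a (Y 1 ω) - H b (Y 1 ω) :=
        (hHcont.measurable.comp (measurable_const.prodMk (hYmeas 1))).sub
          (hHcont.measurable.comp (measurable_const.prodMk (hYmeas 1)))
      have hinnermeas : Measurable fun ω => ⟪KH • (a - b), H a (Y 1 ω) - H b (Y 1 ω)⟫ :=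
        Measurable.inner measurable_const hXmeas
      have hinnerint : Integrable (fun ω => ⟪KH • (a-b), H a (Y 1 ω) - H b (Y 1 ω)⟫) μ := by
        refine aux_integrable_bdd μ hinnermeas.aestronglyMeasurable
          (‖KH • (a-b)‖ * (KH * ‖a - b‖)) (fun ω => ?_)
        rw [Real.norm_eq_abs]
        calc |⟪KH • (a-b), H a (Y 1 ω) - H b (Y 1 ω)⟫|
            ≤ ‖KH • (a-b)‖ * ‖H a (Y 1 ω) - H b (Y 1 ω)‖ := abs_real_inner_le_norm _ _
          _ ≤ ‖KH • (a-b)‖ * (KH * ‖a - b‖) :=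
              mul_le_mul_of_nonneg_left (hHθ a b (Y 1 ω)) (norm_nonneg _)
      have hgnn : ∀ ω, 0 ≤ ‖KH • (a-b)‖ ^ 2 - ⟪KH • (a-b), H a (Y 1 ω) - H b (Y 1 ω)⟫ := by
        intro ω
        have h1 := real_inner_le_norm (KH • (a-b)) (H a (Y 1 ω) - H b (Y 1 ω))
        have h2 : ‖H a (Y 1 ω) - H b (Y 1 ω)‖ ≤ ‖KH • (a-b)‖ := by
          rw [hnormw]; exact hHθ a b (Y 1 ω)
        nlinarith [norm_nonneg (KH • (a-b))]
      have hgint : Integrable (fun ω => ‖KH • (a-b)‖ ^ 2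
          - ⟪KH • (a-b), H a (Y 1 ω) - H b (Y 1 ω)⟫) μ := (integrable_const _).sub hinnerint
      have hg0 : ∫ ω, (‖KH • (a-b)‖ ^ 2 - ⟪KH • (a-b), H a (Y 1 ω) - H b (Y 1 ω)⟫) ∂μ = 0 := by
        rw [integral_sub (integrable_const _) hinnerint, integral_inner (hIntd a b), hEX]
        rw [real_inner_self_eq_norm_sq]
        simp
      have hae0 := (integral_eq_zero_iff_of_nonneg hgnn hgint).mp hg0
      filter_upwards [hae0] with ω hω
      simp only [Pi.zero_apply] at hω
      have hinner : ⟪KH • (a-b), H a (Y 1 ω) - H b (Y 1 ω)⟫ = ‖KH • (a-b)‖ ^ 2 := by linarith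
      have h2 : ‖H a (Y 1 ω) - H b (Y 1 ω)‖ ≤ ‖KH • (a-b)‖ := by
        rw [hnormw]; exact hHθ a b (Y 1 ω)
      have key : ‖(H a (Y 1 ω) - H b (Y 1 ω)) - KH • (a-b)‖ ^ 2 ≤ 0 := by
        rw [norm_sub_sq_real]
        have : ⟪H a (Y 1 ω) - H b (Y 1 ω), KH • (a-b)⟫ = ‖KH • (a-b)‖ ^ 2 := by
          rw [real_inner_comm]; exact hinner
        rw [this]
        nlinarith [norm_nonneg (H a (Y 1 ω) - H b (Y 1 ω)), norm_nonneg (KH • (a-b))]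
      have h4 : (H a (Y 1 ω) - H b (Y 1 ω)) - KH • (a-b) = 0 := by
        have := le_antisymm key (sq_nonneg _)
        rw [pow_eq_zero_iff (two_ne_zero)] at this
        exact norm_eq_zero.mp this
      exact sub_eq_zero.mp h4
    obtain ⟨D, hDc, hDd⟩ := TopologicalSpace.exists_countable_dense
      (EuclideanSpace ℝ (Fin d) × EuclideanSpace ℝ (Fin d))
    have hae : ∀ᵐ ω ∂μ, ∀ p ∈ D, H p.1 (Y 1 ω) - H p.2 (Y 1 ω) = KH • (p.1 - p.2) :=
      (ae_ball_iff hDc).mpr (fun p _ => haepair p.1 p.2)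
    haveI hne : (ae μ).NeBot := ae_neBot.mpr (IsProbabilityMeasure.ne_zero μ)
    obtain ⟨ω₀, hω₀⟩ := hae.exists
    have hall : ∀ a b, H a (Y 1 ω₀) - H b (Y 1 ω₀) = KH • (a - b) := by
      have hfun : (fun p : EuclideanSpace ℝ (Fin d) × EuclideanSpace ℝ (Fin d) =>
          H p.1 (Y 1 ω₀) - H p.2 (Y 1 ω₀)) = fun p => KH • (p.1 - p.2) := by
        apply Continuous.ext_on hDd
        · exact (hHcont.comp (continuous_fst.prodMk continuous_const)).sub
            (hHcont.comp (continuous_snd.prodMk continuous_const))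
        · exact (continuous_fst.sub continuous_snd).const_smul KH
        · exact fun p hp => hω₀ p hp
      intro a b
      exact congrFun hfun (a, b)
    have haff : ∀ a, H a (Y 1 ω₀) = KH • a + H 0 (Y 1 ω₀) := by
      intro a
      have := hall a 0
      rw [sub_zero] at this
      exact sub_eq_iff_eq_add.mp this
    have hglob : ∀ a yy, H a yy = KH • a + H 0 (Y 1 ω₀) := by
      intro a yy
      by_contra hne'
      set v := H a yy - (KH • a + H 0 (Y 1 ω₀)) with hv
      have hvne : v ≠ 0 := fun h0 => hne' (by rw [hv] at h0; exact sub_eq_zero.mp h0)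
      have hvpos : 0 < ‖v‖ := norm_pos_iff.mpr hvne
      set s := ‖yy - Y 1 ω₀‖ / ‖v‖ + 1 with hs
      have hspos : 0 < s := by positivity
      have h1 : ‖H a yy - H (a - s • v) (Y 1 ω₀)‖
          ≤ KH * max ‖a - (a - s • v)‖ ‖yy - Y 1 ω₀‖ := hHpair (a, yy) (a - s • v, Y 1 ω₀)
      have e1 : H a yy - H (a - s • v) (Y 1 ω₀) = v + (KH * s) • v := by
        rw [haff (a - s • v), hv]
        rw [smul_sub, smul_smul]
        abel
      have e2 : ‖a - (a - s • v)‖ = s * ‖v‖ := by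
        rw [show a - (a - s • v) = s • v by abel, norm_smul, Real.norm_eq_abs,
          abs_of_pos hspos]
      have e3 : max ‖a - (a - s • v)‖ ‖yy - Y 1 ω₀‖ = s * ‖v‖ := by
        rw [e2, max_eq_left]
        have : s * ‖v‖ = ‖yy - Y 1 ω₀‖ + ‖v‖ := by
          rw [hs]; field_simp
        rw [this]
        linarith [norm_nonneg v]
      have e4 : ‖H a yy - H (a - s • v) (Y 1 ω₀)‖ = (1 + KH * s) * ‖v‖ := by
        rw [e1, show v + (KH * s) • v = (1 + KH * s) • v by rw [add_smul, one_smul],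
          norm_smul, Real.norm_eq_abs, abs_of_pos (by positivity)]
      rw [e4, e3] at h1
      nlinarith
    have hzz0 : H θ y = H θ y' := by rw [hglob θ y, hglob θ y']
    have hzeq : z = z' := by rw [hzdef, hz'def, hzz0]
    rw [hzeq, sub_self, abs_zero]
    exact hRHSnn
  · -- main case
    have hsplit : (∏ k ∈ Finset.range n, (1 - 2 * lam * γ (k + 1) + KH ^ 2 * γ (k + 1) ^ 2))
        = (∏ k ∈ Finset.range i, (1 - 2 * lam * γ (k + 1) + KH ^ 2 * γ (k + 1) ^ 2)) *
          (∏ k ∈ Finset.Ico i n, (1 - 2 * lam * γ (k + 1) + KH ^ 2 * γ (k + 1) ^ 2)) := by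
      rw [Finset.range_eq_Ico, Finset.range_eq_Ico]
      exact (Finset.prod_Ico_consecutive _ (Nat.zero_le i) hin).symm
    have hdiv : (∏ k ∈ Finset.range n, (1 - 2 * lam * γ (k + 1) + KH ^ 2 * γ (k + 1) ^ 2)) /
        (∏ k ∈ Finset.range i, (1 - 2 * lam * γ (k + 1) + KH ^ 2 * γ (k + 1) ^ 2))
        = ∏ k ∈ Finset.Ico i n, (1 - 2 * lam * γ (k + 1) + KH ^ 2 * γ (k + 1) ^ 2) := by
      rw [hsplit]
      exact mul_div_cancel_left₀ _ hPi
    rw [hdiv]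
    have hPnn : 0 ≤ ∏ k ∈ Finset.Ico i n, (1 - 2 * lam * γ (k+1) + KH ^ 2 * γ (k+1) ^ 2) :=
      Finset.prod_nonneg fun k _ => hfac (k+1) (by omega)
    calc |(∫ ω, ‖Φ z n ω - θstar‖ ∂μ) - ∫ ω, ‖Φ z' n ω - θstar‖ ∂μ| ≤ J := habs
      _ ≤ Real.sqrt (∫ ω, ‖Φ z n ω - Φ z' n ω‖ ^ 2 ∂μ) := by
          rw [← Real.sqrt_sq hJnn]
          exact Real.sqrt_le_sqrt hJsq
      _ ≤ Real.sqrt ((∏ k ∈ Finset.Ico i n,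
            (1 - 2 * lam * γ (k+1) + KH ^ 2 * γ (k+1) ^ 2)) * ‖z - z'‖ ^ 2) :=
          Real.sqrt_le_sqrt (hiter n hin)
      _ = Real.sqrt (∏ k ∈ Finset.Ico i n,
            (1 - 2 * lam * γ (k+1) + KH ^ 2 * γ (k+1) ^ 2)) * ‖z - z'‖ := by
          rw [Real.sqrt_mul hPnn, Real.sqrt_sq (norm_nonneg _)]
      _ ≤ Real.sqrt (∏ k ∈ Finset.Ico i n,
            (1 - 2 * lam * γ (k+1) + KH ^ 2 * γ (k+1) ^ 2)) * (γ i * (KH * ‖y - y'‖)) :=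
          mul_le_mul_of_nonneg_left hzz' (Real.sqrt_nonneg _)
      _ = Real.sqrt (∏ k ∈ Finset.Ico i n,
            (1 - 2 * lam * γ (k+1) + KH ^ 2 * γ (k+1) ^ 2)) * γ i * KH * ‖y - y'‖ := by ring
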